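/- Let X and Y be normally distributed real random variables with the same mean μ and standard deviations 0 < s₁ ≤ s₂. Then the Kolmogorov–Smirnov distance d_KS(X,Y) := sup_{t∈ℝ} |P(X ≤ t) − P(Y ≤ t)| satisfies d_KS(X,Y) ≤ s₂/s₁ − 1. -/

import Mathlib

open MeasureTheory ProbabilityTheory Set
open scoped NNReal Real

set_option linter.deprecated false

noncomputable def stdCDF (t : ℝ) : ℝ := ((gaussianReal 0 1) (Iic t)).toReal

lemma stdCDF_eq (t : ℝ) : stdCDF t = ∫ x in Iic t, gaussianPDFReal 0 1 x := by
  rw [stdCDF, gaussianReal_apply_eq_integral 0 one_ne_zero,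
    ENNReal.toReal_ofReal (setIntegral_nonneg measurableSet_Iic
      (fun x _ => gaussianPDFReal_nonneg 0 1 x))]

lemma stdCDF_sub (a b : ℝ) :
    stdCDF b - stdCDF a = ∫ x in a..b, gaussianPDFReal 0 1 x := by
  rw [stdCDF_eq, stdCDF_eq]
  exact intervalIntegral.integral_Iic_sub_Iic (integrable_gaussianPDFReal 0 1).integrableOn
    (integrable_gaussianPDFReal 0 1).integrableOn

lemma gaussianPDFReal_std (x : ℝ) :
    gaussianPDFReal 0 1 x = (Real.sqrt (2 * π))⁻¹ * Real.exp (- x ^ 2 / 2) := by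
  simp [gaussianPDFReal]

lemma pdf_mono {b x : ℝ} (h : b ^ 2 ≤ x ^ 2) :
    gaussianPDFReal 0 1 x ≤ gaussianPDFReal 0 1 b := by
  rw [gaussianPDFReal_std, gaussianPDFReal_std]
  gcongr

lemma mul_pdf_le_one {u : ℝ} (hu : 0 ≤ u) : u * gaussianPDFReal 0 1 u ≤ 1 := by
  rw [gaussianPDFReal_std]
  have h1 : (1:ℝ) ≤ Real.sqrt (2 * π) := by
    rw [show (1:ℝ) = Real.sqrt 1 by simp]
    exact Real.sqrt_le_sqrt (by nlinarith [Real.pi_gt_three])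
  have hexp : u ≤ Real.exp (u ^ 2 / 2) := by
    nlinarith [Real.add_one_le_exp (u ^ 2 / 2)]
  have key : u * Real.exp (- u ^ 2 / 2) ≤ 1 := by
    calc u * Real.exp (- u ^ 2 / 2)
        ≤ Real.exp (u ^ 2 / 2) * Real.exp (- u ^ 2 / 2) :=
          mul_le_mul_of_nonneg_right hexp (Real.exp_pos _).le
      _ = 1 := by rw [← Real.exp_add]; ring_nf; exact Real.exp_zero
  calc u * ((Real.sqrt (2 * π))⁻¹ * Real.exp (- u ^ 2 / 2))
      = (Real.sqrt (2 * π))⁻¹ * (u * Real.exp (- u ^ 2 / 2)) := by ring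
    _ ≤ 1 * 1 := by
        refine mul_le_mul ?_ key (by positivity) zero_le_one
        exact inv_le_one_of_one_le₀ h1
    _ = 1 := by ring

lemma key_bound (s₁ s₂ : ℝ) (hs₁ : 0 < s₁) (hs : s₁ ≤ s₂) (x : ℝ) :
    |stdCDF (x / s₁) - stdCDF (x / s₂)| ≤ s₂ / s₁ - 1 := by
  have hs₂ : 0 < s₂ := hs₁.trans_le hs
  have hratio : 0 ≤ s₂ / s₁ - 1 := by
    rw [sub_nonneg, le_div_iff₀ hs₁]; linarith
  rcases le_or_gt 0 x with hx | hx
  · -- 0 ≤ b ≤ a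
    have hba : x / s₂ ≤ x / s₁ := div_le_div_of_nonneg_left hx hs₁ hs
    have hb0 : 0 ≤ x / s₂ := div_nonneg hx hs₂.le
    have hnn : (0:ℝ) ≤ stdCDF (x / s₁) - stdCDF (x / s₂) := by
      rw [stdCDF_sub]
      exact intervalIntegral.integral_nonneg hba fun y _ => gaussianPDFReal_nonneg 0 1 y
    rw [abs_of_nonneg hnn, stdCDF_sub]
    have hmono : ∀ y ∈ Icc (x / s₂) (x / s₁),
        gaussianPDFReal 0 1 y ≤ gaussianPDFReal 0 1 (x / s₂) := by
      intro y hy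
      exact pdf_mono (by nlinarith [hy.1, hy.2])
    calc (∫ y in (x / s₂)..(x / s₁), gaussianPDFReal 0 1 y)
        ≤ ∫ _ in (x / s₂)..(x / s₁), gaussianPDFReal 0 1 (x / s₂) :=
          intervalIntegral.integral_mono_on hba
            ((integrable_gaussianPDFReal 0 1).intervalIntegrable)
            intervalIntegrable_const hmono
      _ = (x / s₁ - x / s₂) * gaussianPDFReal 0 1 (x / s₂) := by
          rw [intervalIntegral.integral_const, smul_eq_mul]
      _ = (s₂ / s₁ - 1) * (x / s₂ * gaussianPDFReal 0 1 (x / s₂)) := by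
          field_simp
      _ ≤ (s₂ / s₁ - 1) * 1 := by
          exact mul_le_mul_of_nonneg_left (mul_pdf_le_one hb0) hratio
      _ = s₂ / s₁ - 1 := mul_one _
  · -- a ≤ b ≤ 0
    have hba : x / s₁ ≤ x / s₂ := by
      rw [div_le_div_iff₀ hs₁ hs₂]; nlinarith
    have hb0 : x / s₂ ≤ 0 := div_nonpos_of_nonpos_of_nonneg hx.le hs₂.le
    have hnn : (0:ℝ) ≤ stdCDF (x / s₂) - stdCDF (x / s₁) := by
      rw [stdCDF_sub]
      exact intervalIntegral.integral_nonneg hba fun y _ => gaussianPDFReal_nonneg 0 1 y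
    rw [abs_sub_comm, abs_of_nonneg hnn, stdCDF_sub]
    have hmono : ∀ y ∈ Icc (x / s₁) (x / s₂),
        gaussianPDFReal 0 1 y ≤ gaussianPDFReal 0 1 (x / s₂) := by
      intro y hy
      exact pdf_mono (by nlinarith [hy.1, hy.2])
    have heven : gaussianPDFReal 0 1 (x / s₂) = gaussianPDFReal 0 1 (-(x / s₂)) := by
      rw [gaussianPDFReal_std, gaussianPDFReal_std]; ring_nf
    calc (∫ y in (x / s₁)..(x / s₂), gaussianPDFReal 0 1 y)
        ≤ ∫ _ in (x / s₁)..(x / s₂), gaussianPDFReal 0 1 (x / s₂) :=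
          intervalIntegral.integral_mono_on hba
            ((integrable_gaussianPDFReal 0 1).intervalIntegrable)
            intervalIntegrable_const hmono
      _ = (x / s₂ - x / s₁) * gaussianPDFReal 0 1 (x / s₂) := by
          rw [intervalIntegral.integral_const, smul_eq_mul]
      _ = (s₂ / s₁ - 1) * (-(x / s₂) * gaussianPDFReal 0 1 (-(x / s₂))) := by
          rw [← heven]; field_simp; ring
      _ ≤ (s₂ / s₁ - 1) * 1 :=
          mul_le_mul_of_nonneg_left (mul_pdf_le_one (by linarith)) hratio
      _ = s₂ / s₁ - 1 := mul_one _

lemma gauss_Iic (μ s : ℝ) (hs : 0 < s) (t : ℝ) :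
    gaussianReal μ (⟨s ^ 2, sq_nonneg s⟩ : ℝ≥0) (Iic t)
      = gaussianReal 0 1 (Iic ((t - μ) / s)) := by
  set v : ℝ≥0 := (⟨s ^ 2, sq_nonneg s⟩ : ℝ≥0) with hv
  have h1 : (gaussianReal μ v).map (· + (-μ)) = gaussianReal 0 v := by
    rw [gaussianReal_map_add_const]; simp
  have h2 : (gaussianReal 0 v).map (s⁻¹ * ·) = gaussianReal 0 1 := by
    rw [gaussianReal_map_const_mul]
    congr 1
    · simp
    · ext
      push_cast [hv]
      field_simp
      exact one_div_mul_cancel (pow_ne_zero 2 hs.ne')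
  rw [← h2, ← h1,
    Measure.map_apply (measurable_const_mul _) measurableSet_Iic,
    Measure.map_apply (measurable_add_const _)
      (measurableSet_Iic.preimage (measurable_const_mul _))]
  congr 1
  ext y
  simp only [mem_preimage, mem_Iic]
  rw [div_eq_inv_mul, mul_le_mul_iff_right₀ (inv_pos.mpr hs)]
  constructor <;> intro h <;> linarith

/-- If `X ~ N(μ, s₁²)` and `Y ~ N(μ, s₂²)` with `0 < s₁ ≤ s₂`, then the
Kolmogorov–Smirnov distance `sup_t |P(X ≤ t) − P(Y ≤ t)|` is at most `s₂/s₁ − 1`. -/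
theorem stmt_0 {Ω : Type*} [MeasurableSpace Ω] (P : Measure Ω) [IsProbabilityMeasure P]
    (X Y : Ω → ℝ) (hmX : Measurable X) (hmY : Measurable Y)
    (μ s₁ s₂ : ℝ) (hs₁ : 0 < s₁) (hs : s₁ ≤ s₂)
    (hX : Measure.map X P = gaussianReal μ (⟨s₁ ^ 2, sq_nonneg s₁⟩ : ℝ≥0))
    (hY : Measure.map Y P = gaussianReal μ (⟨s₂ ^ 2, sq_nonneg s₂⟩ : ℝ≥0)) :
    (⨆ t : ℝ, |(P {ω | X ω ≤ t}).toReal - (P {ω | Y ω ≤ t}).toReal|) ≤ s₂ / s₁ - 1 := by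
  have hs₂ : 0 < s₂ := hs₁.trans_le hs
  have hratio : 0 ≤ s₂ / s₁ - 1 := by
    rw [sub_nonneg, le_div_iff₀ hs₁]; linarith
  refine Real.iSup_le (fun t => ?_) hratio
  have hXt : (P {ω | X ω ≤ t}).toReal = stdCDF ((t - μ) / s₁) := by
    have h : P {ω | X ω ≤ t} = (Measure.map X P) (Iic t) := by
      rw [Measure.map_apply hmX measurableSet_Iic]; rfl
    rw [stdCDF, h, hX, gauss_Iic μ s₁ hs₁ t]
  have hYt : (P {ω | Y ω ≤ t}).toReal = stdCDF ((t - μ) / s₂) := by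
    have h : P {ω | Y ω ≤ t} = (Measure.map Y P) (Iic t) := by
      rw [Measure.map_apply hmY measurableSet_Iic]; rfl
    rw [stdCDF, h, hY, gauss_Iic μ s₂ hs₂ t]
  rw [hXt, hYt]
  exact key_bound s₁ s₂ hs₁ hs (t - μ)
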